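/- Let $n\ge 1$ be an integer and let $\eta\in C_c^\infty((0,\infty))$ be a smooth function with compact support in $(0,\infty)$. Then $\int_0^\infty\Big(\eta'(t)+\frac{t}{4}\eta(t)\Big)^2 t^{n-1}e^{t^2/4}\,dt = \int_0^\infty \eta'(t)^2\,t^{n-1}e^{t^2/4}\,dt - \int_0^\infty\Big(\frac{n}{4}+\frac{t^2}{16}\Big)t^{n-1}e^{t^2/4}\,\eta(t)^2\,dt$. -/

import Mathlib

open MeasureTheory

/-- Integration by parts identity: for `η ∈ C_c^∞((0,∞))` and `n ≥ 1`,
`∫₀^∞ (η' + (t/4)η)² tⁿ⁻¹ e^{t²/4} dt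
  = ∫₀^∞ η'² tⁿ⁻¹ e^{t²/4} dt - ∫₀^∞ (n/4 + t²/16) tⁿ⁻¹ e^{t²/4} η² dt`. -/
theorem stmt13 (n : ℕ) (hn : 1 ≤ n) (η : ℝ → ℝ)
    (hη : ContDiff ℝ (⊤ : ℕ∞) η) (hsupp : HasCompactSupport η)
    (hsupp' : tsupport η ⊆ Set.Ioi (0 : ℝ)) :
    ∫ t in Set.Ioi (0 : ℝ),
        (deriv η t + t / 4 * η t) ^ 2 * t ^ (n - 1) * Real.exp (t ^ 2 / 4)
      = (∫ t in Set.Ioi (0 : ℝ),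
          (deriv η t) ^ 2 * t ^ (n - 1) * Real.exp (t ^ 2 / 4))
        - ∫ t in Set.Ioi (0 : ℝ),
            ((n : ℝ) / 4 + t ^ 2 / 16) * t ^ (n - 1) * Real.exp (t ^ 2 / 4) * (η t) ^ 2 := by
  obtain ⟨m, rfl⟩ : ∃ m, n = m + 1 := ⟨n - 1, (Nat.succ_pred_eq_of_pos hn).symm⟩
  simp only [Nat.add_sub_cancel]
  push_cast
  have hder : Differentiable ℝ η := hη.differentiable (by simp)
  have hder' : Continuous (deriv η) := hη.continuous_deriv (by exact_mod_cast le_top)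
  have hout : ∀ t ∉ tsupport η, η t = 0 ∧ deriv η t = 0 := by
    intro t ht
    exact ⟨image_eq_zero_of_notMem_tsupport ht,
      Function.notMem_support.mp fun hs => ht (support_deriv_subset hs)⟩
  set F : ℝ → ℝ := fun t => η t ^ 2 * (t ^ (m + 1) * Real.exp (t ^ 2 / 4)) / 4 with hF
  set G : ℝ → ℝ := fun t =>
    (2 * η t * deriv η t * (t ^ (m + 1) * Real.exp (t ^ 2 / 4))
      + η t ^ 2 * (((m : ℝ) + 1) * t ^ m * Real.exp (t ^ 2 / 4)
        + t ^ (m + 1) * (Real.exp (t ^ 2 / 4) * (t / 2)))) / 4 with hG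
  have hexp : ∀ t : ℝ, HasDerivAt (fun t : ℝ => Real.exp (t ^ 2 / 4))
      (Real.exp (t ^ 2 / 4) * (t / 2)) t := by
    intro t
    have := (((hasDerivAt_pow 2 t).div_const 4)).exp
    simpa [pow_one] using this.congr_deriv (by ring)
  have hexpC : ContDiff ℝ (⊤ : ℕ∞) fun t : ℝ => Real.exp (t ^ 2 / 4) :=
    Real.contDiff_exp.comp ((contDiff_id.pow 2).div_const 4)
  have hexpc : Continuous fun t : ℝ => Real.exp (t ^ 2 / 4) := hexpC.continuous
  have hFderiv : ∀ t, HasDerivAt F (G t) t := by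
    intro t
    have h1 : HasDerivAt (fun t => η t ^ 2) (2 * η t * deriv η t) t := by
      have := ((hder t).hasDerivAt).fun_pow 2
      simpa [mul_comm, mul_assoc, mul_left_comm] using this
    have h2 : HasDerivAt (fun t : ℝ => t ^ (m + 1)) (((m : ℝ) + 1) * t ^ m) t := by
      simpa using hasDerivAt_pow (m + 1) t
    exact ((h1.mul (h2.mul (hexp t))).div_const 4)
  have hGcont : Continuous G := by fun_prop
  have hFsupp : HasCompactSupport F := by
    apply hsupp.mono'
    intro t ht
    by_contra h
    obtain ⟨h1, h2⟩ := hout t h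
    exact Function.mem_support.mp ht (by simp [hF, h1])
  have hFC1 : ContDiff ℝ 1 F := by
    apply ContDiff.div_const
    exact ((hη.of_le (by exact_mod_cast le_top)).pow 2).mul
      ((contDiff_id.pow (m + 1)).mul (hexpC.of_le (by exact_mod_cast le_top)))
  have hGint : ∫ t in Set.Ioi (0 : ℝ), G t = 0 := by
    have hd : deriv F = G := funext fun t => (hFderiv t).deriv
    have := HasCompactSupport.integral_Ioi_deriv_eq hFC1 hFsupp 0
    rw [hd] at this
    rw [this]
    have h0 : η 0 = 0 := (hout 0 fun h => lt_irrefl 0 (Set.mem_Ioi.mp (hsupp' h))).1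
    simp [hF, h0]
  have hBint : IntegrableOn (fun t => (deriv η t) ^ 2 * t ^ m * Real.exp (t ^ 2 / 4))
      (Set.Ioi (0 : ℝ)) := by
    apply Integrable.integrableOn
    apply Continuous.integrable_of_hasCompactSupport (by fun_prop)
    apply hsupp.mono'
    intro t ht
    by_contra h
    obtain ⟨h1, h2⟩ := hout t h
    exact Function.mem_support.mp ht (by simp [h2])
  have hCint : IntegrableOn (fun t => (((m : ℝ) + 1) / 4 + t ^ 2 / 16) * t ^ m *
      Real.exp (t ^ 2 / 4) * (η t) ^ 2) (Set.Ioi (0 : ℝ)) := by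
    apply Integrable.integrableOn
    apply Continuous.integrable_of_hasCompactSupport (by fun_prop)
    apply hsupp.mono'
    intro t ht
    by_contra h
    obtain ⟨h1, h2⟩ := hout t h
    exact Function.mem_support.mp ht (by simp [h1])
  have hGint' : IntegrableOn G (Set.Ioi (0 : ℝ)) := by
    apply Integrable.integrableOn
    apply Continuous.integrable_of_hasCompactSupport hGcont
    apply hsupp.mono'
    intro t ht
    by_contra h
    obtain ⟨h1, h2⟩ := hout t h
    exact Function.mem_support.mp ht (by simp [hG, h1, h2])
  have hBCint : IntegrableOn (fun t => (deriv η t) ^ 2 * t ^ m * Real.exp (t ^ 2 / 4)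
      - (((m : ℝ) + 1) / 4 + t ^ 2 / 16) * t ^ m * Real.exp (t ^ 2 / 4) * (η t) ^ 2)
      (Set.Ioi (0 : ℝ)) := hBint.sub hCint
  have key : ∀ t : ℝ,
      (deriv η t + t / 4 * η t) ^ 2 * t ^ m * Real.exp (t ^ 2 / 4)
        = ((deriv η t) ^ 2 * t ^ m * Real.exp (t ^ 2 / 4)
            - (((m : ℝ) + 1) / 4 + t ^ 2 / 16) * t ^ m * Real.exp (t ^ 2 / 4) * (η t) ^ 2)
          + G t := by
    intro t
    simp only [hG]
    ring
  rw [setIntegral_congr_fun measurableSet_Ioi (fun t _ => key t),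
    integral_add hBCint hGint', integral_sub hBint hCint, hGint, add_zero]
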